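/- Let Δ ⊂ ℝⁿ be compact and T(x) = argmax_{y ∈ Δ} x·y. For any sequence with x_{i+1} ∈ T(x_i), we have ‖x_{i+1} − x_i‖² ≤ ‖x_{i+1}‖² − ‖x_i‖², and consequently ‖x_{i+1} − x_i‖ → 0 as i → ∞. -/

import Mathlib

theorem stmt1 {n : ℕ} (Δ : Set (EuclideanSpace ℝ (Fin n))) (hne : Δ.Nonempty)
    (hc : IsCompact Δ) (x : ℕ → EuclideanSpace ℝ (Fin n)) (hx0 : x 0 ∈ Δ)
    (hstep : ∀ i, x (i + 1) ∈ Δ ∧ ∀ y ∈ Δ, (inner ℝ (x i) y : ℝ) ≤ inner ℝ (x i) (x (i + 1))) :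
    (∀ i, ‖x (i + 1) - x i‖ ^ 2 ≤ ‖x (i + 1)‖ ^ 2 - ‖x i‖ ^ 2) ∧
      Filter.Tendsto (fun i => ‖x (i + 1) - x i‖) Filter.atTop (nhds 0) := by
  have hmem : ∀ i, x i ∈ Δ := by
    intro i
    induction i with
    | zero => exact hx0
    | succ k ih => exact (hstep k).1
  have key : ∀ i, ‖x (i + 1) - x i‖ ^ 2 ≤ ‖x (i + 1)‖ ^ 2 - ‖x i‖ ^ 2 := by
    intro i
    have h1 : (inner ℝ (x i) (x i) : ℝ) ≤ inner ℝ (x i) (x (i + 1)) :=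
      (hstep i).2 (x i) (hmem i)
    have h2 : ‖x (i + 1) - x i‖ ^ 2 =
        ‖x (i + 1)‖ ^ 2 - 2 * (inner ℝ (x (i + 1)) (x i) : ℝ) + ‖x i‖ ^ 2 :=
      norm_sub_sq_real _ _
    have h3 : (inner ℝ (x (i + 1)) (x i) : ℝ) = inner ℝ (x i) (x (i + 1)) :=
      real_inner_comm _ _
    have h4 : (inner ℝ (x i) (x i) : ℝ) = ‖x i‖ ^ 2 := real_inner_self_eq_norm_sq _
    nlinarith [h1, h2, h3, h4]
  refine ⟨key, ?_⟩
  -- f i = ‖x i‖ ^ 2 is monotone and bounded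
  set f : ℕ → ℝ := fun i => ‖x i‖ ^ 2 with hf
  have hmono : Monotone f := by
    apply monotone_nat_of_le_succ
    intro i
    have := key i
    simp only [hf]
    nlinarith [sq_nonneg ‖x (i + 1) - x i‖]
  obtain ⟨M, hM⟩ := hc.isBounded.subset_closedBall 0
  have hbdd : BddAbove (Set.range f) := by
    refine ⟨max M 0 ^ 2, ?_⟩
    rintro _ ⟨i, rfl⟩
    have h1 : ‖x i‖ ≤ M := by
      have := hM (hmem i)
      simpa [Metric.mem_closedBall] using this
    have h2 : ‖x i‖ ≤ max M 0 := h1.trans (le_max_left _ _)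
    exact pow_le_pow_left₀ (norm_nonneg _) h2 2
  have hconv : Filter.Tendsto f Filter.atTop (nhds (⨆ i, f i)) :=
    tendsto_atTop_ciSup hmono hbdd
  have hdiff : Filter.Tendsto (fun i => f (i + 1) - f i) Filter.atTop (nhds 0) := by
    have : Filter.Tendsto (fun i => f (i + 1)) Filter.atTop (nhds (⨆ i, f i)) :=
      hconv.comp (Filter.tendsto_add_atTop_nat 1)
    simpa using this.sub hconv
  have hsq : Filter.Tendsto (fun i => ‖x (i + 1) - x i‖ ^ 2) Filter.atTop (nhds 0) := by
    apply squeeze_zero (fun i => sq_nonneg _) key hdiff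
  have := hsq.sqrt
  simp only [Real.sqrt_zero] at this
  have heq : (fun i => Real.sqrt (‖x (i + 1) - x i‖ ^ 2)) = fun i => ‖x (i + 1) - x i‖ := by
    funext i
    exact Real.sqrt_sq (norm_nonneg _)
  rwa [heq] at this
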